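/- Povzner inequality with angular cutoff. Let N ≥ 2, s > 2, and let b : [−1,1] → ℝ be integrable as a function of σ on S^{N-1} (i.e., σ ↦ b(u·σ) is integrable for unit vectors u) and satisfy b(x) ≥ b₀ for some b₀ > 0 and all x. Then there exist constants C₊ > 0 and K₋ > 0 (depending on N, s, b) such that for all v, v_* ∈ ℝ^N with v ≠ v_*: ∫_{S^{N-1}} (|v'_*|^s + |v'|^s − |v_*|^s − |v|^s) b(cos θ) dσ ≤ C₊ (|v|^{s−2}|v_*|² + |v_*|^{s−2}|v|²) − K₋ (|v|^s + |v_*|^s), where v' = (v+v_*)/2 + (|v−v_*|/2)σ, v'_* = (v+v_*)/2 − (|v−v_*|/2)σ, cos θ = σ·(v−v_*)/|v−v_*|, and dσ is the surface measure on S^{N-1}. -/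

import Mathlib

open MeasureTheory Real RealInnerProductSpace ENNReal

noncomputable section

/-- Euclidean space `ℝ^N`. -/
abbrev Rn (N : ℕ) := EuclideanSpace ℝ (Fin N)

/-- Surface measure on the unit sphere `S^{N-1} ⊂ ℝ^N`: the `(N-1)`-dimensional
Hausdorff measure restricted to the sphere. -/
def sphMeas (N : ℕ) : Measure (Rn N) :=
  (μH[(N : ℝ) - 1]).restrict (Metric.sphere (0 : Rn N) 1)

/-- Post-collisional velocity `v' = (v+v_*)/2 + (|v-v_*|/2) σ`. -/
def vP (N : ℕ) (v w σ : Rn N) : Rn N :=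
  (2:ℝ)⁻¹ • (v + w) + (‖v - w‖ / 2) • σ

/-- Post-collisional velocity `v'_* = (v+v_*)/2 - (|v-v_*|/2) σ`. -/
def vSP (N : ℕ) (v w σ : Rn N) : Rn N :=
  (2:ℝ)⁻¹ • (v + w) - (‖v - w‖ / 2) • σ

/-- Cosine of the deviation angle: `cos θ = σ · (v - v_*)/|v - v_*|`. -/
def cosTheta (N : ℕ) (v w σ : Rn N) : ℝ := ⟪σ, v - w⟫ / ‖v - w‖

lemma sphere_meas (N : ℕ) : MeasurableSet (Metric.sphere (0 : Rn N) 1) :=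
  Metric.isClosed_sphere.measurableSet

lemma map_sphMeas (N : ℕ) (R : Rn N ≃ₗᵢ[ℝ] Rn N) : (sphMeas N).map R = sphMeas N := by
  have hpre : (R : Rn N → Rn N) ⁻¹' (Metric.sphere 0 1) = Metric.sphere 0 1 := by
    ext x
    simp [Metric.mem_sphere, dist_zero_right, R.norm_map]
  have h1 : sphMeas N = ((μH[(N : ℝ) - 1]).restrict ((R : Rn N → Rn N) ⁻¹' (Metric.sphere 0 1))) := by
    rw [hpre]; rfl
  rw [h1, ← Measure.restrict_map R.continuous.measurable (sphere_meas N)]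
  have : (μH[(N : ℝ) - 1] : Measure (Rn N)).map ⇑R = μH[(N : ℝ) - 1] := by
    have := R.toIsometryEquiv.map_hausdorffMeasure ((N : ℝ) - 1)
    simpa using this
  rw [this, hpre]

lemma integral_rot (N : ℕ) (R : Rn N ≃ₗᵢ[ℝ] Rn N) (g : Rn N → ℝ) :
    ∫ σ, g (R σ) ∂(sphMeas N) = ∫ σ, g σ ∂(sphMeas N) := by
  conv_rhs => rw [← map_sphMeas N R]
  exact (R.toHomeomorph.measurableEmbedding.integral_map g).symm

lemma exists_rot (N : ℕ) (hN : 1 ≤ N) (u u' : Rn N) (hu : ‖u‖ = 1) (hu' : ‖u'‖ = 1) :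
    ∃ R : Rn N ≃ₗᵢ[ℝ] Rn N, R u' = u := by
  have i₀ : Fin N := ⟨0, by omega⟩
  have hcard : Module.finrank ℝ (Rn N) = Fintype.card (Fin N) := by
    simp [finrank_euclideanSpace_fin]
  have horth : ∀ z : Rn N, ‖z‖ = 1 →
      Orthonormal ℝ (Set.restrict {i₀} (fun _ : Fin N => z)) := by
    intro z hz
    constructor
    · intro i; exact hz
    · intro i j hij
      exact absurd (Subtype.ext (by
        have := i.2; have := j.2
        simp only [Set.mem_singleton_iff] at *
        omega)) hij
  obtain ⟨b, hb⟩ := (horth u' hu').exists_orthonormalBasis_extension_of_card_eq hcard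
  obtain ⟨b', hb'⟩ := (horth u hu).exists_orthonormalBasis_extension_of_card_eq hcard
  refine ⟨b.repr.trans b'.repr.symm, ?_⟩
  have h1 : b i₀ = u' := hb i₀ rfl
  have h2 : b' i₀ = u := hb' i₀ rfl
  simp [LinearIsometryEquiv.trans_apply, ← h1, ← h2, OrthonormalBasis.repr_self,
    OrthonormalBasis.repr_symm_single]

lemma integral_inner_eq (N : ℕ) (hN : 1 ≤ N) (g : ℝ → ℝ) (u u' : Rn N)
    (hu : ‖u‖ = 1) (hu' : ‖u'‖ = 1) :
    ∫ σ, g ⟪u, σ⟫ ∂(sphMeas N) = ∫ σ, g ⟪u', σ⟫ ∂(sphMeas N) := by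
  obtain ⟨R, hR⟩ := exists_rot N hN u u' hu hu'
  calc ∫ σ, g ⟪u, σ⟫ ∂(sphMeas N) = ∫ σ, g ⟪u, R σ⟫ ∂(sphMeas N) := by
        rw [integral_rot N R (fun σ => g ⟪u, σ⟫)]
    _ = ∫ σ, g ⟪u', σ⟫ ∂(sphMeas N) := by
        congr 1; ext σ; rw [← hR, R.inner_map_map]

lemma superadd_rpow {p : ℝ} (hp : 1 ≤ p) {x y : ℝ} (hx : 0 ≤ x) (hy : 0 ≤ y) :
    x ^ p + y ^ p ≤ (x + y) ^ p := by
  rcases eq_or_lt_of_le hx with h | hx'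
  · simp [← h, Real.zero_rpow (by linarith : p ≠ 0)]
  rcases eq_or_lt_of_le hy with h | hy'
  · simp [← h, Real.zero_rpow (by linarith : p ≠ 0)]
  have hxy : 0 < x + y := by linarith
  have hkey : ∀ z : ℝ, 0 < z → z ≤ x + y → z ^ p ≤ (x + y) ^ p * (z / (x + y)) := by
    intro z hz hzle
    have ht0 : 0 < z / (x + y) := div_pos hz hxy
    have ht1 : z / (x + y) ≤ 1 := by rw [div_le_one hxy]; exact hzle
    have : z ^ p = (x + y) ^ p * (z / (x + y)) ^ p := by
      rw [← Real.mul_rpow hxy.le ht0.le]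
      congr 1
      field_simp
    rw [this]
    have h1 : (z / (x + y)) ^ p ≤ z / (x + y) := by
      calc (z / (x + y)) ^ p ≤ (z / (x + y)) ^ (1:ℝ) :=
            Real.rpow_le_rpow_of_exponent_ge ht0 ht1 hp
        _ = z / (x + y) := Real.rpow_one _
    exact mul_le_mul_of_nonneg_left h1 (Real.rpow_nonneg hxy.le p)
  have h1 := hkey x hx' (by linarith)
  have h2 := hkey y hy' (by linarith)
  have : (x + y) ^ p * (x / (x + y)) + (x + y) ^ p * (y / (x + y)) = (x + y) ^ p := by
    field_simp
  linarith

lemma alg_convex_pair {p : ℝ} (hp : 1 ≤ p) {a b : ℝ} (ha : 0 ≤ a) (hb : 0 ≤ b) (hab : 0 < a + b) :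
    a ^ p + b ^ p ≤
      (a + b) ^ p * ((2:ℝ) ^ (1 - p) + (1 - (2:ℝ) ^ (1 - p)) * (|a - b| / (a + b))) := by
  wlog hba : b ≤ a generalizing a b
  · have h := this hb ha (by linarith) (le_of_not_ge hba)
    rw [add_comm b a, abs_sub_comm b a] at h
    linarith
  have hp0 : p ≠ 0 := by linarith
  set T := a + b with hT
  set t := (a - b) / T with ht
  have ht0 : 0 ≤ t := div_nonneg (by linarith) hab.le
  have ht1 : t ≤ 1 := by rw [ht, div_le_one hab]; linarith
  have habs : |a - b| / (a + b) = t := by rw [abs_of_nonneg (by linarith : (0:ℝ) ≤ a - b)]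
  have hTne : T ≠ 0 := hab.ne'
  have haT : a = T * ((1 + t) / 2) := by
    have hTt : T * t = a - b := by rw [ht]; field_simp
    field_simp [ht]; linarith [hTt, hT]
  have hbT : b = T * ((1 - t) / 2) := by
    have hTt : T * t = a - b := by rw [ht]; field_simp
    field_simp [ht]; linarith [hTt, hT]
  have key1 : ((1 + t) / 2) ^ p ≤ (1 - t) * (2:ℝ)⁻¹ ^ p + t := by
    have hc := (convexOn_rpow hp).2 (Set.mem_Ici.2 (by norm_num : (0:ℝ) ≤ 2⁻¹))
      (Set.mem_Ici.2 (by norm_num : (0:ℝ) ≤ 1)) (by linarith : (0:ℝ) ≤ 1 - t) ht0 (by ring)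
    have harg : (1 - t) • (2⁻¹:ℝ) + t • (1:ℝ) = (1 + t) / 2 := by
      simp only [smul_eq_mul]; ring
    rw [harg] at hc
    simp only [smul_eq_mul, Real.one_rpow, mul_one] at hc
    linarith
  have key2 : ((1 - t) / 2) ^ p ≤ (1 - t) * (2:ℝ)⁻¹ ^ p := by
    have hc := (convexOn_rpow hp).2 (Set.mem_Ici.2 (by norm_num : (0:ℝ) ≤ 2⁻¹))
      (Set.mem_Ici.2 (le_refl (0:ℝ))) (by linarith : (0:ℝ) ≤ 1 - t) ht0 (by ring)
    have harg : (1 - t) • (2⁻¹:ℝ) + t • (0:ℝ) = (1 - t) / 2 := by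
      simp only [smul_eq_mul]; ring
    rw [harg] at hc
    simp only [smul_eq_mul, Real.zero_rpow hp0, mul_zero, add_zero] at hc
    linarith
  have h2 : (2:ℝ) ^ (1 - p) = 2 * (2:ℝ)⁻¹ ^ p := by
    rw [Real.inv_rpow (by norm_num : (0:ℝ) ≤ 2), Real.rpow_sub (by norm_num : (0:ℝ) < 2),
      Real.rpow_one]
    field_simp
  have hTp : (0:ℝ) ≤ T ^ p := Real.rpow_nonneg hab.le p
  calc a ^ p + b ^ p = T ^ p * ((1 + t) / 2) ^ p + T ^ p * ((1 - t) / 2) ^ p := by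
        rw [haT, hbT, Real.mul_rpow hab.le (by linarith), Real.mul_rpow hab.le (by linarith)]
    _ ≤ T ^ p * ((1 - t) * 2 * (2:ℝ)⁻¹ ^ p + t) := by nlinarith [key1, key2]
    _ = T ^ p * ((2:ℝ) ^ (1 - p) + (1 - (2:ℝ) ^ (1 - p)) * t) := by rw [h2]; ring
    _ = _ := by rw [habs]

lemma alg_cross {p : ℝ} (hp : 1 ≤ p) {x y : ℝ} (hx : 0 ≤ x) (hy : 0 ≤ y) :
    (x + y) ^ p - x ^ p - y ^ p ≤ (2:ℝ) ^ p * (x ^ (p - 1) * y + y ^ (p - 1) * x) := by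
  have hp0 : p ≠ 0 := by linarith
  have h2p : (0:ℝ) ≤ (2:ℝ) ^ p := Real.rpow_nonneg (by norm_num) p
  wlog hba : y ≤ x generalizing x y
  · have h := this hy hx (le_of_not_ge hba)
    rw [add_comm y x] at h
    linarith
  rcases eq_or_lt_of_le hx with h | hx'
  · have hy0 : y = 0 := le_antisymm (by linarith) hy
    simp [← h, hy0, Real.zero_rpow hp0]
  have key : (x + y) ^ p ≤ x ^ p + (2:ℝ) ^ p * (x ^ (p - 1) * y) := by
    set t := y / x with htdef
    have ht0 : 0 ≤ t := div_nonneg hy hx'.le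
    have ht1 : t ≤ 1 := by rw [div_le_one hx']; exact hba
    have hconv : (1 + t) ^ p ≤ (1 - t) + t * (2:ℝ) ^ p := by
      have hc := (convexOn_rpow hp).2 (Set.mem_Ici.2 (by norm_num : (0:ℝ) ≤ 1))
        (Set.mem_Ici.2 (by norm_num : (0:ℝ) ≤ 2)) (by linarith : (0:ℝ) ≤ 1 - t) ht0 (by ring)
      have harg : (1 - t) • (1:ℝ) + t • (2:ℝ) = 1 + t := by
        simp only [smul_eq_mul]; ring
      rw [harg] at hc
      simp only [smul_eq_mul, Real.one_rpow, mul_one] at hc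
      linarith
    have hxy : x + y = x * (1 + t) := by rw [htdef]; field_simp
    have hxp : (0:ℝ) ≤ x ^ p := Real.rpow_nonneg hx p
    have hfact : x ^ p * t = x ^ (p - 1) * y := by
      rw [htdef, Real.rpow_sub_one hx'.ne' p]
      ring
    calc (x + y) ^ p = x ^ p * (1 + t) ^ p := by
          rw [hxy, Real.mul_rpow hx'.le (by linarith)]
      _ ≤ x ^ p * ((1 - t) + t * (2:ℝ) ^ p) := by
          apply mul_le_mul_of_nonneg_left hconv hxp
      _ = x ^ p + x ^ p * t * ((2:ℝ) ^ p - 1) := by ring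
      _ ≤ x ^ p + x ^ p * t * (2:ℝ) ^ p := by nlinarith [mul_nonneg hxp ht0]
      _ = x ^ p + (2:ℝ) ^ p * (x ^ (p - 1) * y) := by rw [← hfact]; ring
  have hyp : (0:ℝ) ≤ y ^ p := Real.rpow_nonneg hy p
  have hcr : (0:ℝ) ≤ y ^ (p - 1) * x := mul_nonneg (Real.rpow_nonneg hy _) hx
  nlinarith

lemma coord_abs_le_norm {M : ℕ} (x : Rn M) (j : Fin M) : |x j| ≤ ‖x‖ := by
  rw [EuclideanSpace.norm_eq, ← Real.sqrt_sq_eq_abs]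
  apply Real.sqrt_le_sqrt
  have : x j ^ 2 = ‖x j‖ ^ 2 := by rw [Real.norm_eq_abs, sq_abs]
  rw [this]
  exact Finset.single_le_sum (fun i _ => sq_nonneg ‖x i‖) (Finset.mem_univ j)

lemma sphMeas_cap_pos (K : ℕ) (hK : 1 ≤ K) :
    0 < sphMeas (K + 1) {σ : Rn (K + 1) | |σ 0| ≤ 1/2} := by
  set S : Set (Rn (K + 1)) := {σ | |σ 0| ≤ 1/2} with hS
  set A : Set (Rn (K + 1)) := S ∩ Metric.sphere 0 1 with hA
  set P : Rn (K + 1) → (Fin K → ℝ) := fun σ i => σ i.succ with hP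
  have hLip : LipschitzWith 1 P := by
    apply LipschitzWith.of_dist_le_mul
    intro σ τ
    rw [NNReal.coe_one, one_mul]
    refine dist_pi_le_iff dist_nonneg |>.2 fun i => ?_
    have h1 : dist (σ i.succ) (τ i.succ) = |(σ - τ) i.succ| := by
      rw [Real.dist_eq]
      norm_num [PiLp.sub_apply]
    rw [h1, dist_eq_norm]
    exact coord_abs_le_norm (σ - τ) i.succ
  set U : Set (Fin K → ℝ) := (fun y : Fin K → ℝ => ∑ i, y i ^ 2) ⁻¹' (Set.Ioo (3/4) 1) with hU
  have hUopen : IsOpen U := by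
    apply IsOpen.preimage _ isOpen_Ioo
    exact continuous_finset_sum _ fun i _ => (continuous_apply i).pow 2
  have hUne : U.Nonempty := by
    refine ⟨fun _ => Real.sqrt (9 / (10 * K)), ?_⟩
    have hKpos : (0:ℝ) < K := by exact_mod_cast hK
    have hsq : Real.sqrt (9 / (10 * K)) ^ 2 = 9 / (10 * K) :=
      Real.sq_sqrt (by positivity)
    simp only [hU, Set.mem_preimage, Set.mem_Ioo, hsq, Finset.sum_const,
      Finset.card_univ, Fintype.card_fin, nsmul_eq_mul]
    constructor
    · rw [show (K:ℝ) * (9 / (10 * K)) = 9/10 by field_simp]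
      norm_num
    · rw [show (K:ℝ) * (9 / (10 * K)) = 9/10 by field_simp]
      norm_num
  have hUP : U ⊆ P '' A := by
    rintro y hy
    simp only [hU, Set.mem_preimage, Set.mem_Ioo] at hy
    set q := ∑ i, y i ^ 2 with hq
    have hq0 : 0 ≤ 1 - q := by linarith [hy.2]
    set σ₀ : Rn (K+1) := WithLp.toLp 2 (Fin.cons (Real.sqrt (1 - q)) y : ∀ _ : Fin (K+1), ℝ) with hσ₀
    have hz : σ₀ 0 = Real.sqrt (1 - q) := rfl
    have hsucc : ∀ i : Fin K, σ₀ i.succ = y i := fun i => rfl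
    refine ⟨σ₀, ⟨?_, ?_⟩, ?_⟩
    · show |σ₀ 0| ≤ 1/2
      rw [hz, abs_of_nonneg (Real.sqrt_nonneg _)]
      have : Real.sqrt (1 - q) ≤ Real.sqrt (1/4) := Real.sqrt_le_sqrt (by linarith [hy.1])
      rwa [show (1/4:ℝ) = (1/2)^2 by norm_num, Real.sqrt_sq (by norm_num)] at this
    · rw [Metric.mem_sphere, dist_zero_right, EuclideanSpace.norm_eq]
      have hsum : ∑ i, ‖σ₀ i‖ ^ 2 = 1 := by
        rw [Fin.sum_univ_succ]
        simp only [hz, hsucc, Real.norm_eq_abs, sq_abs]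
        rw [Real.sq_sqrt hq0, ← hq]
        ring
      rw [hsum]
      exact Real.sqrt_one
    · funext i
      exact hsucc i
  -- measure chain
  have hcard : ((K + 1 : ℕ) : ℝ) - 1 = ((K : ℕ) : ℝ) := by push_cast; ring
  have hpi : (μH[((K+1:ℕ) : ℝ) - 1] : Measure (Fin K → ℝ)) = volume := by
    rw [hcard]
    rw [← MeasureTheory.hausdorffMeasure_pi_real (ι := Fin K)]
    congr 1
    simp
  have hvolU : 0 < (μH[((K+1:ℕ) : ℝ) - 1] : Measure (Fin K → ℝ)) U := by
    rw [hpi]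
    exact hUopen.measure_pos volume hUne
  have himg : (μH[((K+1:ℕ) : ℝ) - 1] : Measure (Fin K → ℝ)) (P '' A)
      ≤ μH[((K+1:ℕ) : ℝ) - 1] A := by
    have := hLip.hausdorffMeasure_image_le (by rw [hcard]; positivity : (0:ℝ) ≤ ((K+1:ℕ) : ℝ) - 1) A
    simpa using this
  have : 0 < μH[((K+1:ℕ) : ℝ) - 1] A := lt_of_lt_of_le (lt_of_lt_of_le hvolU (measure_mono hUP)) himg
  rw [sphMeas, Measure.restrict_apply' Metric.isClosed_sphere.measurableSet]
  exact this

lemma vP_norm_sq (N : ℕ) (v w σ : Rn N) :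
    ‖vP N v w σ‖^2 = ‖v + w‖^2 / 4 + (‖v - w‖ / 2) * ⟪v + w, σ⟫ + (‖v - w‖/2)^2 * ‖σ‖^2 := by
  rw [vP, norm_add_sq_real, norm_smul, norm_smul, real_inner_smul_left, real_inner_smul_right]
  have h1 : ‖(2:ℝ)⁻¹‖ = 2⁻¹ := by norm_num
  have h2 : ‖‖v - w‖ / 2‖ = ‖v - w‖ / 2 := by
    rw [Real.norm_eq_abs, abs_of_nonneg (by positivity)]
  rw [h1, h2]
  ring

lemma vSP_norm_sq (N : ℕ) (v w σ : Rn N) :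
    ‖vSP N v w σ‖^2 = ‖v + w‖^2 / 4 - (‖v - w‖ / 2) * ⟪v + w, σ⟫ + (‖v - w‖/2)^2 * ‖σ‖^2 := by
  rw [vSP, norm_sub_sq_real, norm_smul, norm_smul, real_inner_smul_left, real_inner_smul_right]
  have h1 : ‖(2:ℝ)⁻¹‖ = 2⁻¹ := by norm_num
  have h2 : ‖‖v - w‖ / 2‖ = ‖v - w‖ / 2 := by
    rw [Real.norm_eq_abs, abs_of_nonneg (by positivity)]
  rw [h1, h2]
  ring

lemma parallelogram (N : ℕ) (v w : Rn N) :
    ‖v + w‖^2 + ‖v - w‖^2 = 2 * ‖v‖^2 + 2 * ‖w‖^2 := by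
  rw [norm_add_sq_real, norm_sub_sq_real]; ring

lemma vsum_sq (N : ℕ) (v w σ : Rn N) (hσ : ‖σ‖ = 1) :
    ‖vSP N v w σ‖^2 + ‖vP N v w σ‖^2 = ‖v‖^2 + ‖w‖^2 := by
  rw [vP_norm_sq, vSP_norm_sq, hσ]
  have := parallelogram N v w
  nlinarith [this]

lemma vdiff_sq (N : ℕ) (v w σ : Rn N) :
    ‖vSP N v w σ‖^2 - ‖vP N v w σ‖^2 = -(‖v - w‖ * ⟪v + w, σ⟫) := by
  rw [vP_norm_sq, vSP_norm_sq]
  ring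
set_option maxHeartbeats 1000000 in
/-- **Povzner inequality with angular cutoff**: for `s > 2` and an angular kernel `b`
integrable on the sphere and bounded below by `b₀ > 0`, there are constants `C₊, K₋ > 0`
such that for all `v ≠ v_*`,
`∫_{S^{N-1}} (|v'_*|^s + |v'|^s - |v_*|^s - |v|^s) b(cos θ) dσ
  ≤ C₊ (|v|^{s-2}|v_*|² + |v_*|^{s-2}|v|²) - K₋ (|v|^s + |v_*|^s)`. -/
theorem povzner_inequality
    (N : ℕ) (hN : 2 ≤ N) (s : ℝ) (hs : 2 < s)
    (b : ℝ → ℝ) (b₀ : ℝ) (hb₀ : 0 < b₀) (hlow : ∀ x : ℝ, b₀ ≤ b x)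
    (hint : ∀ u : Rn N, ‖u‖ = 1 → Integrable (fun σ : Rn N => b ⟪u, σ⟫) (sphMeas N)) :
    ∃ Cpl Kmi : ℝ, 0 < Cpl ∧ 0 < Kmi ∧
      ∀ v w : Rn N, v ≠ w →
        (∫ σ : Rn N,
            (‖vSP N v w σ‖ ^ s + ‖vP N v w σ‖ ^ s - ‖w‖ ^ s - ‖v‖ ^ s) *
              b (cosTheta N v w σ) ∂(sphMeas N))
          ≤ Cpl * (‖v‖ ^ (s - 2) * ‖w‖ ^ 2 + ‖w‖ ^ (s - 2) * ‖v‖ ^ 2)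
            - Kmi * (‖v‖ ^ s + ‖w‖ ^ s) := by
  obtain ⟨K, rfl⟩ : ∃ K, N = K + 1 := ⟨N - 1, by omega⟩
  have hK : 1 ≤ K := by omega
  have hs0 : (0:ℝ) < s := by linarith
  set p := s / 2 with hp_def
  have hp1 : 1 < p := by rw [hp_def]; linarith
  have hp1' : 1 ≤ p := hp1.le
  have h2p0 : (0:ℝ) < (2:ℝ) ^ (1 - p) := Real.rpow_pos_of_pos (by norm_num) _
  have h2p1 : (2:ℝ) ^ (1 - p) < 1 :=
    Real.rpow_lt_one_of_one_lt_of_neg (by norm_num) (by linarith)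
  set κ := 1 - (2:ℝ) ^ (1 - p) with hκ_def
  have hκ0 : 0 < κ := by rw [hκ_def]; linarith
  have hκ1 : κ ≤ 1 := by rw [hκ_def]; linarith
  -- rpow/pow conversion
  have hrpow2 : ∀ t : ℝ, 0 ≤ t → ((t^2 : ℝ)) ^ p = t ^ s := by
    intro t ht
    rw [← Real.rpow_natCast t 2, ← Real.rpow_mul ht]
    congr 1
    push_cast
    rw [hp_def]; ring
  have hrpow2' : ∀ t : ℝ, 0 ≤ t → ((t^2 : ℝ)) ^ (p - 1) = t ^ (s - 2) := by
    intro t ht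
    rw [← Real.rpow_natCast t 2, ← Real.rpow_mul ht]
    congr 1
    push_cast
    rw [hp_def]; ring
  -- the unit vector e₀
  set e₀ : Rn (K+1) := EuclideanSpace.single (0 : Fin (K+1)) (1:ℝ) with he₀_def
  have he₀ : ‖e₀‖ = 1 := by
    rw [he₀_def, EuclideanSpace.norm_single, norm_one]
  have hB₀int : Integrable (fun σ : Rn (K+1) => b ⟪e₀, σ⟫) (sphMeas (K+1)) := hint e₀ he₀
  haveI hfin : IsFiniteMeasure (sphMeas (K+1)) := by
    have hconst : Integrable (fun _ : Rn (K+1) => b₀) (sphMeas (K+1)) := by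
      refine hB₀int.mono' aestronglyMeasurable_const
        (Filter.Eventually.of_forall fun σ => ?_)
      rw [Real.norm_eq_abs, abs_of_pos hb₀]
      exact hlow _
    rcases integrable_const_iff.mp hconst with h | h
    · exact absurd h hb₀.ne'
    · exact h
  -- ae facts of the sphere
  have hsph1 : ∀ᵐ σ ∂(sphMeas (K+1)), ‖σ‖ = 1 := by
    have h := ae_restrict_mem (μ := μH[((K+1:ℕ) : ℝ) - 1])
      (Metric.isClosed_sphere.measurableSet (s := Metric.sphere (0 : Rn (K+1)) 1))
    refine h.mono fun σ hσ => ?_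
    rwa [Metric.mem_sphere, dist_zero_right] at hσ
  -- integrability of 1 - |⟪e, σ⟫| for unit e
  have hint1e : ∀ e : Rn (K+1), ‖e‖ = 1 →
      Integrable (fun σ : Rn (K+1) => 1 - |⟪e, σ⟫|) (sphMeas (K+1)) := by
    intro e he
    refine (integrable_const (2:ℝ)).mono'
      ((continuous_const.sub (Continuous.abs
        (Continuous.inner (continuous_const (y := e)) continuous_id))).aestronglyMeasurable)
      (hsph1.mono fun σ hσ => ?_)
    have h1 : |⟪e, σ⟫| ≤ 1 := by
      have := abs_real_inner_le_norm e σ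
      rwa [he, hσ, one_mul] at this
    rw [Real.norm_eq_abs]
    rw [abs_sub_comm]
    calc |(|⟪e,σ⟫| - 1)| ≤ |(|⟪e,σ⟫|)| + |(1:ℝ)| := abs_sub _ _
      _ ≤ 2 := by
        rw [abs_abs, abs_one]
        linarith
  -- constants β and cN
  set β := ∫ σ, b ⟪e₀, σ⟫ ∂(sphMeas (K+1)) with hβ_def
  have hβ0 : 0 ≤ β := integral_nonneg fun σ => le_trans hb₀.le (hlow _)
  set cN := ∫ σ, (1 - |⟪e₀, σ⟫|) ∂(sphMeas (K+1)) with hcN_def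
  have hcN_pos : 0 < cN := by
    set S : Set (Rn (K+1)) := {σ | |σ 0| ≤ 1/2} with hS_def
    have hScont : Continuous fun σ : Rn (K+1) => |σ 0| :=
      ((EuclideanSpace.proj (0 : Fin (K+1))).continuous).abs
    have hSmeas : MeasurableSet S := by
      have : IsClosed S := isClosed_le hScont continuous_const
      exact this.measurableSet
    have hcap := sphMeas_cap_pos K hK
    have hfin' : sphMeas (K+1) S ≠ ⊤ := measure_ne_top _ _
    have hinner0 : ∀ σ : Rn (K+1), ⟪e₀, σ⟫ = σ 0 := by
      intro σ
      rw [he₀_def, EuclideanSpace.inner_single_left]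
      simp
    have h1 : (1/2 : ℝ) * (sphMeas (K+1) S).toReal
        ≤ ∫ σ in S, (1 - |⟪e₀, σ⟫|) ∂(sphMeas (K+1)) := by
      refine setIntegral_ge_of_const_le_real hSmeas hfin' ?_ ((hint1e e₀ he₀).integrableOn)
      intro σ hσ
      rw [hinner0 σ]
      have : |σ 0| ≤ 1/2 := hσ
      linarith
    have hnn : 0 ≤ᵐ[sphMeas (K+1)] fun σ => 1 - |⟪e₀, σ⟫| := by
      refine hsph1.mono fun σ hσ => ?_
      have := abs_real_inner_le_norm e₀ σ
      rw [he₀, hσ, one_mul] at this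
      simp only [Pi.zero_apply]
      linarith
    have h2 : ∫ σ in S, (1 - |⟪e₀, σ⟫|) ∂(sphMeas (K+1)) ≤ cN :=
      setIntegral_le_integral (hint1e e₀ he₀) hnn
    have h3 : 0 < (sphMeas (K+1) S).toReal := ENNReal.toReal_pos hcap.ne' hfin'
    linarith
  -- the constants
  refine ⟨(β + 1) * (2:ℝ) ^ p, κ * b₀ * cN, ?_, ?_, ?_⟩
  · exact mul_pos (by linarith) (Real.rpow_pos_of_pos (by norm_num) _)
  · positivity
  intro v w hvw
  set μ := sphMeas (K+1)
  set X := ‖v‖ with hX_def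
  set Y := ‖w‖ with hY_def
  set x := X^2 with hx_def
  set y := Y^2 with hy_def
  have hx0 : 0 ≤ x := sq_nonneg X
  have hy0 : 0 ≤ y := sq_nonneg Y
  have hE : 0 < x + y := by
    have hvw0 : v ≠ 0 ∨ w ≠ 0 := by
      by_contra h
      push_neg at h
      exact hvw (h.1.trans h.2.symm)
    rcases hvw0 with h | h
    · have : 0 < X := by rw [hX_def]; exact norm_pos_iff.mpr h
      nlinarith
    · have : 0 < Y := by rw [hY_def]; exact norm_pos_iff.mpr h
      nlinarith
  have hvwne : v - w ≠ 0 := sub_ne_zero.mpr hvw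
  have hnvw : 0 < ‖v - w‖ := norm_pos_iff.mpr hvwne
  set u : Rn (K+1) := ‖v - w‖⁻¹ • (v - w) with hu_def
  have hu : ‖u‖ = 1 := by
    rw [hu_def, norm_smul, Real.norm_eq_abs, abs_of_pos (inv_pos.mpr hnvw),
      inv_mul_cancel₀ hnvw.ne']
  set B := fun σ : Rn (K+1) => b ⟪u, σ⟫ with hB_def
  have hBint : Integrable B μ := hint u hu
  have hBlow : ∀ σ, b₀ ≤ B σ := fun σ => hlow _
  have hBnn : ∀ σ, 0 ≤ B σ := fun σ => le_trans hb₀.le (hBlow σ)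
  have hBaesm : AEStronglyMeasurable B μ := hBint.aestronglyMeasurable
  have hBeq : ∀ σ, b (cosTheta (K+1) v w σ) = B σ := by
    intro σ
    rw [hB_def]
    congr 1
    rw [cosTheta, hu_def, real_inner_smul_left, real_inner_comm, div_eq_inv_mul]
  -- functions
  set G := fun σ : Rn (K+1) => ‖vSP (K+1) v w σ‖ ^ s + ‖vP (K+1) v w σ‖ ^ s with hG_def
  have hGcont : Continuous G := by
    have h1 : Continuous fun σ : Rn (K+1) => vSP (K+1) v w σ := by
      unfold vSP
      exact continuous_const.sub (continuous_const_smul _)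
    have h2 : Continuous fun σ : Rn (K+1) => vP (K+1) v w σ := by
      unfold vP
      exact continuous_const.add (continuous_const_smul _)
    exact ((h1.norm).rpow_const fun _ => Or.inr hs0.le).add
      ((h2.norm).rpow_const fun _ => Or.inr hs0.le)
  have hGnn : ∀ σ, 0 ≤ G σ := fun σ =>
    add_nonneg (Real.rpow_nonneg (norm_nonneg _) _) (Real.rpow_nonneg (norm_nonneg _) _)
  set c := fun σ : Rn (K+1) => ‖v - w‖ * |⟪v + w, σ⟫| / (x + y) with hc_def
  have hccont : Continuous c := by
    apply Continuous.div_const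
    exact continuous_const.mul
      ((Continuous.inner (continuous_const (y := v + w)) continuous_id).abs)
  have hcnn : ∀ σ, 0 ≤ c σ :=
    fun σ => div_nonneg (mul_nonneg (norm_nonneg _) (abs_nonneg _)) hE.le
  -- c ≤ 1 on the sphere
  have hc1 : ∀ᵐ σ ∂μ, c σ ≤ 1 := by
    refine hsph1.mono fun σ hσ => ?_
    rw [hc_def, div_le_one hE]
    have h1 : |⟪v + w, σ⟫| ≤ ‖v + w‖ := by
      have := abs_real_inner_le_norm (v + w) σ
      rwa [hσ, mul_one] at this
    have h2 : ‖v - w‖ * ‖v + w‖ ≤ x + y := by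
      have hpar := parallelogram (K+1) v w
      rw [hx_def, hy_def, hX_def, hY_def]
      nlinarith [sq_nonneg (‖v + w‖ - ‖v - w‖)]
    calc ‖v - w‖ * |⟪v + w, σ⟫| ≤ ‖v - w‖ * ‖v + w‖ :=
          mul_le_mul_of_nonneg_left h1 (norm_nonneg _)
      _ ≤ x + y := h2
  -- pointwise main bound
  have hpt : ∀ᵐ σ ∂μ, G σ ≤ (x + y) ^ p * (1 - κ * (1 - c σ)) := by
    refine hsph1.mono fun σ hσ => ?_
    have hsum := vsum_sq (K+1) v w σ hσ
    have hdiff := vdiff_sq (K+1) v w σ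
    set a1 := ‖vSP (K+1) v w σ‖^2 with ha1
    set a2 := ‖vP (K+1) v w σ‖^2 with ha2
    have ha10 : 0 ≤ a1 := sq_nonneg _
    have ha20 : 0 ≤ a2 := sq_nonneg _
    have hsum' : a1 + a2 = x + y := hsum
    have key := alg_convex_pair hp1' ha10 ha20 (by rw [hsum']; exact hE)
    rw [hsum'] at key
    have habs : |a1 - a2| = ‖v - w‖ * |⟪v + w, σ⟫| := by
      rw [hdiff, abs_neg, abs_mul, abs_of_nonneg (norm_nonneg _)]
    have hcc : |a1 - a2| / (x + y) = c σ := by rw [habs, hc_def]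
    rw [hcc] at key
    have hG : G σ = a1 ^ p + a2 ^ p := by
      rw [hG_def, ha1, ha2, hrpow2 _ (norm_nonneg _), hrpow2 _ (norm_nonneg _)]
    rw [hG]
    calc a1 ^ p + a2 ^ p ≤ (x+y)^p * ((2:ℝ)^(1-p) + (1 - (2:ℝ)^(1-p)) * c σ) := key
      _ = (x + y) ^ p * (1 - κ * (1 - c σ)) := by rw [hκ_def]; ring
  -- integrability facts
  have hGB_int : Integrable (fun σ => G σ * B σ) μ := by
    refine (hBint.const_mul ((x+y)^p)).mono'
      (hGcont.aestronglyMeasurable.mul hBaesm) ?_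
    refine (hpt.and hc1).mono fun σ ⟨h1, h2⟩ => ?_
    rw [Real.norm_eq_abs, abs_of_nonneg (mul_nonneg (hGnn σ) (hBnn σ))]
    have hG1 : G σ ≤ (x+y)^p := by
      have hmn : 0 ≤ κ * (1 - c σ) := mul_nonneg hκ0.le (by linarith)
      have : (1 : ℝ) - κ * (1 - c σ) ≤ 1 := by linarith
      calc G σ ≤ (x+y)^p * (1 - κ*(1 - c σ)) := h1
        _ ≤ (x+y)^p * 1 := by
            apply mul_le_mul_of_nonneg_left this (Real.rpow_nonneg hE.le p)
        _ = (x+y)^p := mul_one _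
    exact mul_le_mul_of_nonneg_right hG1 (hBnn σ)
  have hcB_int : Integrable (fun σ => c σ * B σ) μ := by
    refine hBint.mono' (hccont.aestronglyMeasurable.mul hBaesm) ?_
    refine hc1.mono fun σ h1 => ?_
    rw [Real.norm_eq_abs, abs_of_nonneg (mul_nonneg (hcnn σ) (hBnn σ))]
    calc c σ * B σ ≤ 1 * B σ := mul_le_mul_of_nonneg_right h1 (hBnn σ)
      _ = B σ := one_mul _
  have h1cB_int : Integrable (fun σ => (1 - c σ) * B σ) μ := by
    have : (fun σ => (1 - c σ) * B σ) = fun σ => B σ - c σ * B σ := by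
      funext σ; ring
    rw [this]
    exact hBint.sub hcB_int
  -- ∫ B = β
  have hβu : ∫ σ, B σ ∂μ = β := by
    rw [hB_def, hβ_def]
    exact integral_inner_eq (K+1) (by omega) b u e₀ hu he₀
  -- J ≥ b₀ * cN
  have hJ : b₀ * cN ≤ ∫ σ, (1 - c σ) * B σ ∂μ := by
    obtain ⟨e, he, hce⟩ : ∃ e : Rn (K+1), ‖e‖ = 1 ∧ ∀ σ, c σ ≤ |⟪e, σ⟫| := by
      rcases eq_or_ne (v + w) 0 with hvw0 | hvw0
      · refine ⟨e₀, he₀, fun σ => ?_⟩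
        rw [hc_def, hvw0]
        simp [inner_zero_left]
      · have hnvw2 : 0 < ‖v + w‖ := norm_pos_iff.mpr hvw0
        refine ⟨‖v + w‖⁻¹ • (v + w), ?_, fun σ => ?_⟩
        · rw [norm_smul, Real.norm_eq_abs, abs_of_pos (inv_pos.mpr hnvw2),
            inv_mul_cancel₀ hnvw2.ne']
        · rw [real_inner_smul_left, abs_mul, abs_of_pos (inv_pos.mpr hnvw2)]
          rw [hc_def]
          rw [div_le_iff₀ hE]  -- c ≤ |..| ↔ ...
          have h2 : ‖v - w‖ * ‖v + w‖ ≤ x + y := by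
            have hpar := parallelogram (K+1) v w
            rw [hx_def, hy_def, hX_def, hY_def]
            nlinarith [sq_nonneg (‖v + w‖ - ‖v - w‖)]
          calc ‖v - w‖ * |⟪v + w, σ⟫|
              = (‖v - w‖ * ‖v + w‖) * (‖v + w‖⁻¹ * |⟪v + w, σ⟫|) := by
                rw [show (‖v - w‖ * ‖v + w‖) * (‖v + w‖⁻¹ * |⟪v + w, σ⟫|)
                    = ‖v - w‖ * (‖v + w‖ * ‖v + w‖⁻¹) * |⟪v + w, σ⟫| from by ring,
                  mul_inv_cancel₀ hnvw2.ne']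
                ring
            _ ≤ (x + y) * (‖v + w‖⁻¹ * |⟪v + w, σ⟫|) := by
                apply mul_le_mul_of_nonneg_right h2
                positivity
            _ = ‖v + w‖⁻¹ * |⟪v + w, σ⟫| * (x + y) := by ring
    have heB_int : Integrable (fun σ => (1 - |⟪e, σ⟫|) * B σ) μ := by
      refine hBint.mono'
        (((continuous_const.sub (Continuous.abs
          (Continuous.inner (continuous_const (y := e)) continuous_id))).aestronglyMeasurable).mul hBaesm)
        (hsph1.mono fun σ hσ => ?_)
      have h1 : |⟪e, σ⟫| ≤ 1 := by
        have := abs_real_inner_le_norm e σ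
        rwa [he, hσ, one_mul] at this
      rw [Real.norm_eq_abs, abs_mul]
      have h2 : |(1 - |⟪e, σ⟫|)| ≤ 1 := by
        rw [abs_le]
        refine ⟨by linarith [abs_nonneg ⟪e,σ⟫, h1], by linarith [abs_nonneg ⟪e,σ⟫, h1]⟩
      calc |(1 - |⟪e, σ⟫|)| * |B σ| ≤ 1 * |B σ| :=
            mul_le_mul_of_nonneg_right h2 (abs_nonneg _)
        _ = B σ := by rw [one_mul, abs_of_nonneg (hBnn σ)]
    have step1 : ∫ σ, (1 - |⟪e, σ⟫|) * B σ ∂μ ≤ ∫ σ, (1 - c σ) * B σ ∂μ := by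
      refine integral_mono_ae heB_int h1cB_int ?_
      refine Filter.Eventually.of_forall fun σ => ?_
      exact mul_le_mul_of_nonneg_right (by linarith [hce σ]) (hBnn σ)
    have step2 : ∫ σ, (1 - |⟪e, σ⟫|) * b₀ ∂μ ≤ ∫ σ, (1 - |⟪e, σ⟫|) * B σ ∂μ := by
      refine integral_mono_ae ((hint1e e he).mul_const b₀) heB_int ?_
      refine hsph1.mono fun σ hσ => ?_
      have h1 : |⟪e, σ⟫| ≤ 1 := by
        have := abs_real_inner_le_norm e σ
        rwa [he, hσ, one_mul] at this
      exact mul_le_mul_of_nonneg_left (hBlow σ) (by linarith)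
    have step3 : ∫ σ, (1 - |⟪e, σ⟫|) * b₀ ∂μ = b₀ * cN := by
      rw [integral_mul_const, hcN_def]
      rw [integral_inner_eq (K+1) (by omega) (fun t => 1 - |t|) e e₀ he he₀]
      ring
    linarith
  -- main computation
  have hLHSeq : (∫ σ : Rn (K+1),
      (‖vSP (K+1) v w σ‖ ^ s + ‖vP (K+1) v w σ‖ ^ s - ‖w‖ ^ s - ‖v‖ ^ s) *
        b (cosTheta (K+1) v w σ) ∂μ)
      = ∫ σ, G σ * B σ ∂μ - (Y ^ s + X ^ s) * β := by
    have hfun : (fun σ : Rn (K+1) =>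
        (‖vSP (K+1) v w σ‖ ^ s + ‖vP (K+1) v w σ‖ ^ s - ‖w‖ ^ s - ‖v‖ ^ s) *
          b (cosTheta (K+1) v w σ))
        = fun σ => G σ * B σ - (Y ^ s + X ^ s) * B σ := by
      funext σ
      rw [hBeq σ, hG_def]
      ring
    rw [hfun, integral_sub hGB_int (hBint.const_mul _), integral_const_mul, hβu]
  -- upper bound for ∫ G B
  have hD_int : Integrable (fun σ => (x+y)^p * (1 - κ*(1 - c σ)) * B σ) μ := by
    have hD_eq : (fun σ => (x+y)^p * (1 - κ*(1 - c σ)) * B σ)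
        = fun σ => (x+y)^p * B σ - ((x+y)^p * κ) * ((1 - c σ) * B σ) := by
      funext σ; ring
    rw [hD_eq]
    exact (hBint.const_mul _).sub (h1cB_int.const_mul _)
  have hGB_le : ∫ σ, G σ * B σ ∂μ
      ≤ (x+y)^p * β - (x+y)^p * κ * (b₀ * cN) := by
    have step1 : ∫ σ, G σ * B σ ∂μ ≤ ∫ σ, (x+y)^p * (1 - κ*(1 - c σ)) * B σ ∂μ := by
      refine integral_mono_ae hGB_int hD_int ?_
      refine hpt.mono fun σ h => ?_
      exact mul_le_mul_of_nonneg_right h (hBnn σ)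
    have step2 : ∫ σ, (x+y)^p * (1 - κ*(1 - c σ)) * B σ ∂μ
        = (x+y)^p * β - (x+y)^p * κ * (∫ σ, (1 - c σ) * B σ ∂μ) := by
      have hD_eq : (fun σ => (x+y)^p * (1 - κ*(1 - c σ)) * B σ)
          = fun σ => (x+y)^p * B σ - ((x+y)^p * κ) * ((1 - c σ) * B σ) := by
        funext σ; ring
      rw [hD_eq, integral_sub (hBint.const_mul _) (h1cB_int.const_mul _),
        integral_const_mul, integral_const_mul, hβu]
    have step3 : (x+y)^p * κ * (b₀ * cN) ≤ (x+y)^p * κ * (∫ σ, (1 - c σ) * B σ ∂μ) := by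
      apply mul_le_mul_of_nonneg_left hJ
      positivity
    linarith
  -- final algebra
  rw [hLHSeq]
  have hXs : X ^ s = x ^ p := by rw [hx_def]; exact (hrpow2 X (norm_nonneg v)).symm
  have hYs : Y ^ s = y ^ p := by rw [hy_def]; exact (hrpow2 Y (norm_nonneg w)).symm
  have hXs2 : X ^ (s - 2) = x ^ (p - 1) := by
    rw [hx_def]; exact (hrpow2' X (norm_nonneg v)).symm
  have hYs2 : Y ^ (s - 2) = y ^ (p - 1) := by
    rw [hy_def]; exact (hrpow2' Y (norm_nonneg w)).symm
  have hcross := alg_cross hp1' hx0 hy0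
  have hsuper := superadd_rpow hp1' hx0 hy0
  have hR1 : 0 ≤ x ^ (p-1) * y + y ^ (p-1) * x :=
    add_nonneg (mul_nonneg (Real.rpow_nonneg hx0 _) hy0)
      (mul_nonneg (Real.rpow_nonneg hy0 _) hx0)
  have h2pp : (0:ℝ) < (2:ℝ) ^ p := Real.rpow_pos_of_pos (by norm_num) p
  have hKmi0 : 0 < κ * b₀ * cN := by positivity
  show (∫ σ, G σ * B σ ∂μ) - (Y ^ s + X ^ s) * β
      ≤ (β + 1) * (2:ℝ)^p * (X ^ (s-2) * Y ^ 2 + Y ^ (s-2) * X ^ 2)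
        - κ * b₀ * cN * (X ^ s + Y ^ s)
  rw [hXs, hYs, hXs2, hYs2, ← hx_def, ← hy_def]
  have hb1 : β * ((x+y)^p - x^p - y^p) ≤ (β + 1) * (2:ℝ)^p * (x ^ (p-1) * y + y ^ (p-1) * x) := by
    calc β * ((x+y)^p - x^p - y^p) ≤ β * ((2:ℝ)^p * (x ^ (p-1) * y + y ^ (p-1) * x)) :=
          mul_le_mul_of_nonneg_left hcross hβ0
      _ ≤ (β + 1) * ((2:ℝ)^p * (x ^ (p-1) * y + y ^ (p-1) * x)) := by
          apply mul_le_mul_of_nonneg_right (by linarith) (by positivity)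
      _ = (β + 1) * (2:ℝ)^p * (x ^ (p-1) * y + y ^ (p-1) * x) := by ring
  have hb2 : κ * b₀ * cN * (x^p + y^p) ≤ κ * b₀ * cN * (x+y)^p :=
    mul_le_mul_of_nonneg_left hsuper hKmi0.le
  nlinarith [hGB_le]
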